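/- Let ν ≥ 1 be an integer, let s = (s_1,…,s_ν) ∈ (0,∞)^ν, and let M be a real number with M ≥ ν·(max_{1≤θ≤ν} s_θ + 1). Then for every k = (k_1,…,k_ν) ∈ ℤ^ν one has 2^{-(k_1 s_1 + ⋯ + k_ν s_ν)} · 2^{-M · max_{1≤θ≤ν} max(-k_θ, 0)} ≤ ∏_{θ=1}^{ν} 2^{-|k_θ| · min(1, s_θ)}. -/
import Mathlib


/-- Let `ν ≥ 1`, let `s ∈ (0,∞)^ν`, and let `M` be a real number with
`M ≥ ν·(max_θ s_θ + 1)`.  Then for every `k ∈ ℤ^ν`,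
`2^{-(k·s)} · 2^{-M·max_θ max(-k_θ,0)} ≤ ∏_θ 2^{-|k_θ|·min(1,s_θ)}`. -/
theorem stmt_0 (ν : ℕ) (hν : 1 ≤ ν) (s : Fin ν → ℝ) (hs : ∀ θ, 0 < s θ)
    (M : ℝ) (hM : (ν : ℝ) * ((⨆ θ, s θ) + 1) ≤ M) (k : Fin ν → ℤ) :
    (2 : ℝ) ^ (-(∑ θ, (k θ : ℝ) * s θ)) *
        (2 : ℝ) ^ (-(M * ⨆ θ, max (-(k θ : ℝ)) 0)) ≤
      ∏ θ, (2 : ℝ) ^ (-(|(k θ : ℝ)| * min 1 (s θ))) := by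
  haveI : Nonempty (Fin ν) := Fin.pos_iff_nonempty.mp hν
  set S : ℝ := ⨆ θ, s θ with hS
  set K : ℝ := ⨆ θ, max (-(k θ : ℝ)) 0 with hK
  have hSb : ∀ θ, s θ ≤ S := fun θ => le_ciSup (Set.Finite.bddAbove (Set.finite_range _)) θ
  have hKb : ∀ θ, max (-(k θ : ℝ)) 0 ≤ K :=
    fun θ => le_ciSup (f := fun θ => max (-(k θ : ℝ)) 0) (Set.Finite.bddAbove (Set.finite_range _)) θ
  have hK0 : 0 ≤ K := le_trans (le_max_right _ _) (hKb (Classical.arbitrary _))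
  have hS0 : 0 < S := lt_of_lt_of_le (hs (Classical.arbitrary _)) (hSb _)
  have key : ∑ θ, |(k θ : ℝ)| * min 1 (s θ) ≤ (∑ θ, (k θ : ℝ) * s θ) + M * K := by
    have hterm : ∀ θ : Fin ν, |(k θ : ℝ)| * min 1 (s θ) - (k θ : ℝ) * s θ ≤ K * (1 + S) := by
      intro θ
      rcases le_or_gt 0 ((k θ : ℝ)) with h | h
      · have h1 : |(k θ : ℝ)| = (k θ : ℝ) := abs_of_nonneg h
        have : (k θ : ℝ) * min 1 (s θ) ≤ (k θ : ℝ) * s θ :=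
          mul_le_mul_of_nonneg_left (min_le_right _ _) h
        have h0 : 0 ≤ K * (1 + S) := mul_nonneg hK0 (by linarith)
        rw [h1]; linarith
      · have h1 : |(k θ : ℝ)| = -(k θ : ℝ) := abs_of_neg h
        have h2 : -(k θ : ℝ) ≤ K := le_trans (le_max_left _ _) (hKb θ)
        have h3 : min 1 (s θ) ≤ 1 := min_le_left _ _
        have h4 : s θ ≤ S := hSb θ
        have h5 : 0 ≤ -(k θ : ℝ) := le_of_lt (neg_pos.mpr h)
        have : |(k θ : ℝ)| * min 1 (s θ) - (k θ : ℝ) * s θ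
            = (-(k θ : ℝ)) * (min 1 (s θ) + s θ) := by rw [h1]; ring
        rw [this]
        calc (-(k θ : ℝ)) * (min 1 (s θ) + s θ) ≤ (-(k θ : ℝ)) * (1 + S) :=
              mul_le_mul_of_nonneg_left (by linarith) h5
          _ ≤ K * (1 + S) := mul_le_mul_of_nonneg_right h2 (by linarith)
    have hsum : ∑ θ, (|(k θ : ℝ)| * min 1 (s θ) - (k θ : ℝ) * s θ)
        ≤ ∑ _θ : Fin ν, K * (1 + S) := Finset.sum_le_sum fun θ _ => hterm θ
    have hνK : (ν : ℝ) * (K * (1 + S)) ≤ M * K := by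
      have : (ν : ℝ) * (S + 1) * K ≤ M * K := mul_le_mul_of_nonneg_right hM hK0
      nlinarith
    rw [Finset.sum_sub_distrib] at hsum
    simp only [Finset.sum_const, Finset.card_univ, Fintype.card_fin, nsmul_eq_mul] at hsum
    linarith
  have hprod : ∏ θ, (2 : ℝ) ^ (-(|(k θ : ℝ)| * min 1 (s θ)))
      = (2 : ℝ) ^ (∑ θ, -(|(k θ : ℝ)| * min 1 (s θ))) := by
    exact (Real.rpow_sum_of_pos two_pos _ _).symm
  rw [hprod, ← Real.rpow_add two_pos]
  apply Real.rpow_le_rpow_of_exponent_le one_le_two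
  simp only [Finset.sum_neg_distrib]
  linarith
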